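/- (Cardinality of the reception-scenario set, equation (9) with τ̄ ≥ d̄.) Let d̄, τ̄, n_y be natural numbers with τ̄ ≥ d̄ and n_y ≥ 1. Consider the set of functions f : Fin n_y → Fin (τ̄ + 1) → Option ℕ such that for all s, m, δ, if f s m = some δ then δ ≤ min m d̄. Then this set is finite and its cardinality equals ((d̄ + 2)! · (d̄ + 2)^{τ̄ − d̄})^{n_y}. -/
import Mathlib

lemma prod_range_min_aux (d : ℕ) :
    ∏ m ∈ Finset.range (d + 1), (m + 2) = Nat.factorial (d + 2) := by
  induction d with
  | zero => simp [Nat.factorial]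
  | succ n ih =>
      rw [Finset.prod_range_succ, ih,
        show n + 1 + 2 = n + 2 + 1 from rfl, Nat.factorial_succ (n+2), Nat.mul_comm]

lemma prod_range_min (d τ : ℕ) (h : d ≤ τ) :
    ∏ m ∈ Finset.range (τ + 1), (min m d + 2)
      = Nat.factorial (d + 2) * (d + 2) ^ (τ - d) := by
  induction τ with
  | zero =>
      interval_cases d
      simp [Nat.factorial]
  | succ n ih =>
      rcases Nat.eq_or_lt_of_le h with h' | h'
      · subst h'
        simp only [Nat.sub_self, pow_zero, mul_one]
        rw [← prod_range_min_aux (n+1)]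
        apply Finset.prod_congr rfl
        intro m hm
        simp only [Finset.mem_range] at hm
        rw [min_eq_left (by omega)]
      · have hd : d ≤ n := by omega
        rw [Finset.prod_range_succ, ih hd, min_eq_right (show d ≤ n + 1 by omega),
          show n + 1 - d = (n - d) + 1 by omega, pow_succ]
        ring

/-- Cardinality of the reception-scenario set (equation (9) of the paper, case `τ̄ ≥ d̄`):
the set of reception histories `f : Fin n_y → Fin (τ̄+1) → Option ℕ`, where
`f s m = some δ` means the measurement sent by sensor `s` exactly `m` steps ago was
accepted with end-to-end delay `δ ≤ min m d̄`, is finite with cardinality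
`((d̄+2)! * (d̄+2)^(τ̄-d̄))^{n_y}`. -/
theorem stmt_13 (dbar τbar ny : ℕ) (hτ : dbar ≤ τbar) (hny : 1 ≤ ny) :
    ({f : Fin ny → Fin (τbar + 1) → Option ℕ |
        ∀ (s : Fin ny) (m : Fin (τbar + 1)) (δ : ℕ),
          f s m = some δ → δ ≤ min (m : ℕ) dbar}).Finite ∧
    Nat.card {f : Fin ny → Fin (τbar + 1) → Option ℕ |
        ∀ (s : Fin ny) (m : Fin (τbar + 1)) (δ : ℕ),
          f s m = some δ → δ ≤ min (m : ℕ) dbar}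
      = ((Nat.factorial (dbar + 2)) * (dbar + 2) ^ (τbar - dbar)) ^ ny := by
  classical
  set F : Fin (τbar + 1) → Finset (Option ℕ) :=
    fun m => insert none ((Finset.range (min (m : ℕ) dbar + 1)).image some) with hF
  have hFcard : ∀ m : Fin (τbar + 1), (F m).card = min (m : ℕ) dbar + 2 := by
    intro m
    rw [hF]
    rw [Finset.card_insert_of_notMem (by simp), Finset.card_image_of_injective _
      (Option.some_injective ℕ), Finset.card_range]
  have hmem : ∀ (o : Option ℕ) (m : Fin (τbar + 1)),
      o ∈ F m ↔ ∀ δ : ℕ, o = some δ → δ ≤ min (m : ℕ) dbar := by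
    intro o m
    cases o with
    | none => simp [hF]
    | some a =>
        simp only [hF, Finset.mem_insert, Finset.mem_image, Finset.mem_range,
          Option.some.injEq, reduceCtorEq, false_or]
        constructor
        · rintro ⟨δ, hδ, rfl⟩ δ' h; omega
        · intro h; exact ⟨a, by have := h a rfl; omega, rfl⟩
  have hset : {f : Fin ny → Fin (τbar + 1) → Option ℕ |
        ∀ (s : Fin ny) (m : Fin (τbar + 1)) (δ : ℕ),
          f s m = some δ → δ ≤ min (m : ℕ) dbar}
      = Set.pi Set.univ (fun s : Fin ny =>
          Set.pi Set.univ (fun m : Fin (τbar + 1) => (F m : Set (Option ℕ)))) := by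
    ext f
    simp only [Set.mem_setOf_eq, Set.mem_pi, Set.mem_univ, forall_true_left,
      Finset.coe_sort_coe, Finset.mem_coe]
    constructor
    · intro h s m; exact (hmem _ m).2 (h s m)
    · intro h s m δ hδ; exact (hmem _ m).1 (h s m) δ hδ
  rw [hset]
  constructor
  · exact Set.Finite.pi (fun s => Set.Finite.pi (fun m => (F m).finite_toSet))
  · have e1 := Equiv.Set.univPi (fun s : Fin ny =>
      Set.pi Set.univ (fun m : Fin (τbar + 1) => (F m : Set (Option ℕ))))
    rw [Nat.card_congr e1, Nat.card_pi]
    have : ∀ s : Fin ny,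
        Nat.card ↥(Set.pi Set.univ (fun m : Fin (τbar + 1) => (F m : Set (Option ℕ))))
          = Nat.factorial (dbar + 2) * (dbar + 2) ^ (τbar - dbar) := by
      intro s
      have e2 := Equiv.Set.univPi (fun m : Fin (τbar + 1) => (F m : Set (Option ℕ)))
      rw [Nat.card_congr e2, Nat.card_pi]
      have : ∀ m : Fin (τbar + 1), Nat.card ↥((F m : Set (Option ℕ)))
          = min (m : ℕ) dbar + 2 := by
        intro m
        rw [Nat.card_coe_set_eq, Set.ncard_coe_finset, hFcard]
      rw [Finset.prod_congr rfl (fun m _ => this m)]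
      rw [← prod_range_min dbar τbar hτ, ← Fin.prod_univ_eq_prod_range]
    rw [Finset.prod_congr rfl (fun s _ => this s), Finset.prod_const,
      Finset.card_univ, Fintype.card_fin]
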